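/- For every a ∈ ℝ, the limit as n → ∞ (over positive integers n) of the quotient [Σ_{k ∈ ℤ} sin((a/n)·(1 + 8k)) · exp(−(2/n)·(k + 4k²))] / [(1/n) · Σ_{k ∈ ℤ} (1 + 8k) · exp(−(2/n)·(k + 4k²))] equals sinh(aπ)/π. -/

import Mathlib

open Real Filter Complex Topology

lemma summable_workhorse (ε L : ℝ) (hε : 0 < ε) :
    Summable (fun m : ℤ => (|(m : ℝ)| + 1) * Real.exp (L * |(m : ℝ)| - ε * (m : ℝ) ^ 2)) := by
  have key : Summable (fun n : ℕ => (|(n : ℝ)| + 1) * Real.exp (L * |(n : ℝ)| - ε * (n : ℝ) ^ 2)) := by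
    have h2e : ‖(2 : ℝ) * Real.exp (-1)‖ < 1 := by
      rw [Real.norm_eq_abs, abs_of_pos (by positivity)]
      have h1 : (2:ℝ) < Real.exp 1 := by nlinarith [Real.exp_one_gt_d9]
      calc (2:ℝ) * Real.exp (-1) = 2 / Real.exp 1 := by rw [Real.exp_neg]; ring
        _ < 1 := by rw [div_lt_one (Real.exp_pos 1)]; exact h1
    have base : Summable (fun n : ℕ => Real.exp ((L+1)^2/(4*ε)) * ((2:ℝ) * Real.exp (-1)) ^ n) :=
      (summable_geometric_of_norm_lt_one h2e).mul_left _
    refine base.of_nonneg_of_le (fun n => by positivity) (fun n => ?_)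
    have habs : |(n:ℝ)| = (n:ℝ) := abs_of_nonneg (Nat.cast_nonneg n)
    rw [habs, mul_pow]
    have h1 : ((n:ℝ) + 1) ≤ 2 ^ n := by
      exact_mod_cast Nat.succ_le_of_lt (Nat.lt_two_pow_self (n := n))
    have h2 : Real.exp (L * n - ε * (n:ℝ)^2) ≤ Real.exp ((L+1)^2/(4*ε)) * Real.exp (-1) ^ n := by
      rw [← Real.exp_nat_mul, ← Real.exp_add]
      apply Real.exp_le_exp.2
      have : 0 ≤ ε * ((n:ℝ) - (L+1)/(2*ε))^2 := by positivity
      have hexp : ε * ((n:ℝ) - (L+1)/(2*ε))^2 = ε * (n:ℝ)^2 - (L+1)*(n:ℝ) + (L+1)^2/(4*ε) := by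
        field_simp
        ring
      nlinarith
    calc ((n:ℝ) + 1) * Real.exp (L * n - ε * (n:ℝ)^2)
        ≤ 2 ^ n * (Real.exp ((L+1)^2/(4*ε)) * Real.exp (-1) ^ n) := by
          apply mul_le_mul h1 h2 (Real.exp_pos _).le (by positivity)
      _ = Real.exp ((L+1)^2/(4*ε)) * (2 ^ n * Real.exp (-1) ^ n) := by ring
  apply Summable.of_nat_of_neg
  · exact key
  · simpa using key

lemma theta_shift (t : ℝ) (ht : 0 < t) (b : ℂ) :
    ∑' k : ℤ, Complex.exp (-(t:ℂ) * (1 + 8*(k:ℂ))^2 + b * (1 + 8*(k:ℂ))) =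
      (Real.sqrt (π / (64*t)) : ℂ) * Complex.exp (b - (t:ℂ)) *
        ∑' m : ℤ, Complex.exp (-((π:ℂ)^2/(64*(t:ℂ))) *
          ((m:ℂ) + Complex.I * ((4*b - 8*(t:ℂ))/(π:ℂ)))^2) := by
  have hπ : (π:ℂ) ≠ 0 := Complex.ofReal_ne_zero.2 Real.pi_ne_zero
  have ht' : (t:ℂ) ≠ 0 := Complex.ofReal_ne_zero.2 ht.ne'
  have ha : 0 < (((64*t/π:ℝ)):ℂ).re := by
    rw [Complex.ofReal_re]; positivity
  have key := Complex.tsum_exp_neg_quadratic ha ((4*b - 8*(t:ℂ))/(π:ℂ))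
  have lhs_eq : ∑' k : ℤ, Complex.exp (-(t:ℂ) * (1 + 8*(k:ℂ))^2 + b * (1 + 8*(k:ℂ))) =
      Complex.exp (b - (t:ℂ)) * ∑' k : ℤ,
        Complex.exp (-(π:ℂ) * (((64*t/π:ℝ)):ℂ) * (k:ℂ)^2 + 2*(π:ℂ) * ((4*b - 8*(t:ℂ))/(π:ℂ)) * (k:ℂ)) := by
    rw [← tsum_mul_left]
    refine tsum_congr fun k => ?_
    rw [← Complex.exp_add]
    congr 1
    push_cast
    field_simp
    ring
  rw [lhs_eq, key]
  have hconst : 1 / (((64*t/π:ℝ)):ℂ) ^ (1/2 : ℂ) = ((Real.sqrt (π / (64*t)) : ℝ) : ℂ) := by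
    have h0 : (0:ℝ) ≤ 64*t/π := by positivity
    rw [show ((1/2 : ℂ)) = ((1/2 : ℝ) : ℂ) by norm_num, ← Complex.ofReal_cpow h0]
    rw [← Real.sqrt_eq_rpow]
    rw [show π / (64*t) = (64*t/π)⁻¹ by field_simp]
    rw [Real.sqrt_inv]
    norm_num
  have hquot : -(π:ℂ) / (((64*t/π:ℝ)):ℂ) = -((π:ℂ)^2/(64*(t:ℂ))) := by
    push_cast
    field_simp
  rw [hconst, hquot]
  ring

lemma summable_cexp_of_bound (f : ℤ → ℂ) (ε L : ℝ) (hε : 0 < ε)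
    (h : ∀ m, ‖f m‖ ≤ (|(m:ℝ)| + 1) * Real.exp (L * |(m:ℝ)| - ε*(m:ℝ)^2)) : Summable f :=
  Summable.of_norm ((summable_workhorse ε L hε).of_nonneg_of_le (fun _ => norm_nonneg _) h)

lemma ofReal_add_mul_I_re (x y : ℝ) : ((x:ℂ) + (y:ℂ)*Complex.I).re = x := by
  simp only [Complex.add_re, Complex.ofReal_re, Complex.mul_re, Complex.I_re, Complex.I_im,
    Complex.ofReal_im]
  ring

lemma cexp_im' (x y : ℝ) : (Complex.exp ((x:ℂ) + (y:ℂ)*Complex.I)).im = Real.exp x * Real.sin y := by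
  rw [Complex.exp_im]; simp

lemma im_tsum' {f : ℤ → ℂ} (h : Summable f) : (∑' m, f m).im = ∑' m, (f m).im := by
  simpa using Complex.imCLM.map_tsum h

lemma summable_lhs (t : ℝ) (ht : 0 < t) (c : ℝ) :
    Summable (fun k : ℤ => Complex.exp (-(t:ℂ) * (1 + 8*(k:ℂ))^2 + ((c:ℝ)*Complex.I) * (1 + 8*(k:ℂ)))) := by
  apply summable_cexp_of_bound _ (64*t) (16*t) (by positivity)
  intro k
  have harg : (-(t:ℂ) * (1 + 8*(k:ℂ))^2 + ((c:ℝ)*Complex.I) * (1 + 8*(k:ℂ)))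
      = ((-t*(1+8*(k:ℝ))^2 : ℝ):ℂ) + ((c*(1+8*(k:ℝ)) : ℝ):ℂ)*Complex.I := by
    push_cast; ring
  rw [harg, Complex.norm_exp]
  rw [ofReal_add_mul_I_re]
  have h1 : (1:ℝ) ≤ |(k:ℝ)| + 1 := by linarith [abs_nonneg ((k:ℝ))]
  have h2 : Real.exp (-t * (1+8*(k:ℝ))^2) ≤ Real.exp (16*t * |(k:ℝ)| - 64*t*(k:ℝ)^2) := by
    apply Real.exp_le_exp.2
    rcases abs_cases ((k:ℝ)) with ⟨h, _⟩ | ⟨h, _⟩ <;> nlinarith [sq_nonneg (1+8*(k:ℝ))]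
  calc Real.exp (-t * (1+8*(k:ℝ))^2) ≤ Real.exp (16*t * |(k:ℝ)| - 64*t*(k:ℝ)^2) := h2
    _ ≤ (|(k:ℝ)| + 1) * Real.exp (16*t * |(k:ℝ)| - 64*t*(k:ℝ)^2) :=
        le_mul_of_one_le_left (Real.exp_pos _).le h1

lemma summable_rhs (t a : ℝ) (ht : 0 < t) :
    Summable (fun m : ℤ => Complex.exp (((π*a*m - π^2*m^2/(64*t) : ℝ):ℂ) + ((π*m/4 : ℝ):ℂ)*Complex.I)) := by
  apply summable_cexp_of_bound _ (π^2/(64*t)) (π * |a|) (by positivity)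
  intro m
  rw [Complex.norm_exp]
  rw [ofReal_add_mul_I_re]
  have h1 : (1:ℝ) ≤ |(m:ℝ)| + 1 := by linarith [abs_nonneg ((m:ℝ))]
  have h2 : Real.exp (π*a*m - π^2*m^2/(64*t)) ≤ Real.exp (π * |a| * |(m:ℝ)| - π^2/(64*t)*(m:ℝ)^2) := by
    apply Real.exp_le_exp.2
    have h3 : π*a*(m:ℝ) ≤ π * |a| * |(m:ℝ)| := by
      calc π*a*(m:ℝ) ≤ |π*a*(m:ℝ)| := le_abs_self _
        _ = π * |a| * |(m:ℝ)| := by rw [abs_mul, abs_mul, abs_of_pos Real.pi_pos]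
    have h4 : π^2/(64*t)*(m:ℝ)^2 = π^2*(m:ℝ)^2/(64*t) := by ring
    linarith
  calc _ ≤ Real.exp (π * |a| * |(m:ℝ)| - π^2/(64*t)*(m:ℝ)^2) := h2
    _ ≤ _ := le_mul_of_one_le_left (Real.exp_pos _).le h1

lemma numerator_eval (t a : ℝ) (ht : 0 < t) :
    ∑' k : ℤ, Real.sin (8*a*t*(1+8*(k:ℝ))) * Real.exp (-t*(1+8*(k:ℝ))^2) =
      Real.sqrt (π/(64*t)) * Real.exp (-(16*a^2*t)) *
        ∑' m : ℤ, Real.sin (π*m/4) * Real.exp (π*a*m - π^2*m^2/(64*t)) := by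
  have hπ : (π:ℂ) ≠ 0 := Complex.ofReal_ne_zero.2 Real.pi_ne_zero
  have ht' : (t:ℂ) ≠ 0 := Complex.ofReal_ne_zero.2 ht.ne'
  have hs1 := summable_lhs t ht (8*a*t)
  have hs2 := summable_rhs t a ht
  have key := theta_shift t ht ((8*a*t:ℝ)*Complex.I)
  set C : ℂ := (Real.sqrt (π / (64*t)) : ℂ) with hC
  have per : ∀ m : ℤ, Complex.exp ((8*a*t:ℝ)*Complex.I - (t:ℂ)) *
      Complex.exp (-((π:ℂ)^2/(64*(t:ℂ))) *
          ((m:ℂ) + Complex.I * ((4*((8*a*t:ℝ)*Complex.I) - 8*(t:ℂ))/(π:ℂ)))^2)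
      = ((Real.exp (-(16*a^2*t)) : ℝ):ℂ) *
        Complex.exp (((π*a*m - π^2*m^2/(64*t) : ℝ):ℂ) + ((π*m/4 : ℝ):ℂ)*Complex.I) := by
    intro m
    rw [← Complex.exp_add, Complex.ofReal_exp, ← Complex.exp_add]
    congr 1
    push_cast
    field_simp
    ring_nf
    simp only [show (Complex.I)^3 = -Complex.I by rw [pow_succ, Complex.I_sq]; ring,
      show (Complex.I)^4 = 1 by rw [pow_succ, show (Complex.I)^3 = -Complex.I by rw [pow_succ, Complex.I_sq]; ring]; simp [Complex.I_mul_I],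
      Complex.I_sq]
    ring
  have step : C * Complex.exp ((8*a*t:ℝ)*Complex.I - (t:ℂ)) *
        ∑' m : ℤ, Complex.exp (-((π:ℂ)^2/(64*(t:ℂ))) *
          ((m:ℂ) + Complex.I * ((4*((8*a*t:ℝ)*Complex.I) - 8*(t:ℂ))/(π:ℂ)))^2)
      = C * ((Real.exp (-(16*a^2*t)) : ℝ):ℂ) *
        ∑' m : ℤ, Complex.exp (((π*a*m - π^2*m^2/(64*t) : ℝ):ℂ) + ((π*m/4 : ℝ):ℂ)*Complex.I) := by
    calc C * Complex.exp ((8*a*t:ℝ)*Complex.I - (t:ℂ)) * ∑' m : ℤ, Complex.exp (-((π:ℂ)^2/(64*(t:ℂ))) *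
          ((m:ℂ) + Complex.I * ((4*((8*a*t:ℝ)*Complex.I) - 8*(t:ℂ))/(π:ℂ)))^2)
        = C * ∑' m : ℤ, Complex.exp ((8*a*t:ℝ)*Complex.I - (t:ℂ)) * Complex.exp (-((π:ℂ)^2/(64*(t:ℂ))) *
          ((m:ℂ) + Complex.I * ((4*((8*a*t:ℝ)*Complex.I) - 8*(t:ℂ))/(π:ℂ)))^2) := by
          rw [tsum_mul_left]; ring
      _ = C * ∑' m : ℤ, ((Real.exp (-(16*a^2*t)) : ℝ):ℂ) *
            Complex.exp (((π*a*m - π^2*m^2/(64*t) : ℝ):ℂ) + ((π*m/4 : ℝ):ℂ)*Complex.I) := by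
          rw [tsum_congr per]
      _ = C * ((Real.exp (-(16*a^2*t)) : ℝ):ℂ) *
            ∑' m : ℤ, Complex.exp (((π*a*m - π^2*m^2/(64*t) : ℝ):ℂ) + ((π*m/4 : ℝ):ℂ)*Complex.I) := by
          rw [tsum_mul_left]; ring
  have imkey := congrArg Complex.im (key.trans step)
  calc ∑' k : ℤ, Real.sin (8*a*t*(1+8*(k:ℝ))) * Real.exp (-t*(1+8*(k:ℝ))^2)
      = ∑' k : ℤ, (Complex.exp (-(t:ℂ) * (1 + 8*(k:ℂ))^2 + ((8*a*t:ℝ)*Complex.I) * (1 + 8*(k:ℂ)))).im := by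
        refine tsum_congr fun k => ?_
        have harg : (-(t:ℂ) * (1 + 8*(k:ℂ))^2 + ((8*a*t:ℝ)*Complex.I) * (1 + 8*(k:ℂ)))
            = ((-t*(1+8*(k:ℝ))^2 : ℝ):ℂ) + ((8*a*t*(1+8*(k:ℝ)) : ℝ):ℂ)*Complex.I := by
          push_cast; ring
        rw [harg, cexp_im']
        ring
    _ = (∑' k : ℤ, Complex.exp (-(t:ℂ) * (1 + 8*(k:ℂ))^2 + ((8*a*t:ℝ)*Complex.I) * (1 + 8*(k:ℂ)))).im := by
        rw [im_tsum' hs1]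
    _ = (C * ((Real.exp (-(16*a^2*t)) : ℝ):ℂ) *
        ∑' m : ℤ, Complex.exp (((π*a*m - π^2*m^2/(64*t) : ℝ):ℂ) + ((π*m/4 : ℝ):ℂ)*Complex.I)).im := imkey
    _ = Real.sqrt (π/(64*t)) * Real.exp (-(16*a^2*t)) *
        ∑' m : ℤ, Real.sin (π*m/4) * Real.exp (π*a*m - π^2*m^2/(64*t)) := by
        rw [hC, ← Complex.ofReal_mul, Complex.im_ofReal_mul, im_tsum' hs2]
        congr 1
        refine tsum_congr fun m => ?_
        rw [cexp_im']
        ring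



lemma hasDerivAt_S (t : ℝ) (ht : 0 < t) :
    HasDerivAt (fun b : ℝ => ∑' k : ℤ, Complex.exp (-(t:ℂ)*(1+8*(k:ℂ))^2 + (b:ℂ)*(1+8*(k:ℂ))))
      (∑' k : ℤ, (1+8*(k:ℂ)) * Complex.exp (-(t:ℂ)*(1+8*(k:ℂ))^2)) 0 := by
  have hderiv : ∀ (k : ℤ) (b : ℝ), b ∈ Set.Ioo (-1:ℝ) 1 →
      HasDerivAt (fun b : ℝ => Complex.exp (-(t:ℂ)*(1+8*(k:ℂ))^2 + (b:ℂ)*(1+8*(k:ℂ))))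
        ((1+8*(k:ℂ)) * Complex.exp (-(t:ℂ)*(1+8*(k:ℂ))^2 + (b:ℂ)*(1+8*(k:ℂ)))) b := by
    intro k b _
    have h1 : HasDerivAt (fun b : ℝ => ((b:ℝ):ℂ)) 1 b := by
      simpa using (hasDerivAt_id b).ofReal_comp
    have h2 := ((h1.mul_const (1+8*(k:ℂ))).const_add (-(t:ℂ)*(1+8*(k:ℂ))^2)).cexp
    convert h2 using 1
    ring
  have hbound : ∀ (k : ℤ) (b : ℝ), b ∈ Set.Ioo (-1:ℝ) 1 →
      ‖(1+8*(k:ℂ)) * Complex.exp (-(t:ℂ)*(1+8*(k:ℂ))^2 + (b:ℂ)*(1+8*(k:ℂ)))‖ ≤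
        9 * Real.exp 1 * ((|(k:ℝ)|+1) * Real.exp ((8+16*t) * |(k:ℝ)| - 64*t*(k:ℝ)^2)) := by
    intro k b hb
    obtain ⟨hb1, hb2⟩ := hb
    have harg : (-(t:ℂ)*(1+8*(k:ℂ))^2 + (b:ℂ)*(1+8*(k:ℂ)))
        = ((-t*(1+8*(k:ℝ))^2 + b*(1+8*(k:ℝ)) : ℝ):ℂ) := by push_cast; ring
    have hcast : (1+8*(k:ℂ)) = (((1+8*(k:ℝ)) : ℝ):ℂ) := by push_cast; ring
    rw [harg, hcast, norm_mul, Complex.norm_real, ← Complex.ofReal_exp, Complex.norm_real,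
      Real.norm_eq_abs, Real.norm_eq_abs, Real.abs_exp]
    have habs : |1+8*(k:ℝ)| ≤ 8*|(k:ℝ)| + 1 := by
      calc |1+8*(k:ℝ)| ≤ |(1:ℝ)| + |8*(k:ℝ)| := abs_add_le _ _
        _ = 8*|(k:ℝ)| + 1 := by rw [abs_mul]; norm_num; ring
    have hexp : Real.exp (-t*(1+8*(k:ℝ))^2 + b*(1+8*(k:ℝ)))
        ≤ Real.exp 1 * Real.exp ((8+16*t) * |(k:ℝ)| - 64*t*(k:ℝ)^2) := by
      rw [← Real.exp_add]
      apply Real.exp_le_exp.2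
      have h3 : b*(1+8*(k:ℝ)) ≤ |1+8*(k:ℝ)| := by
        calc b*(1+8*(k:ℝ)) ≤ |b*(1+8*(k:ℝ))| := le_abs_self _
          _ = |b| * |1+8*(k:ℝ)| := abs_mul _ _
          _ ≤ 1 * |1+8*(k:ℝ)| := by
              apply mul_le_mul_of_nonneg_right _ (abs_nonneg _)
              rw [abs_le]; constructor <;> linarith
          _ = |1+8*(k:ℝ)| := one_mul _
      have h4 : -t*(1+8*(k:ℝ))^2 ≤ 16*t*|(k:ℝ)| - 64*t*(k:ℝ)^2 := by
        rcases abs_cases ((k:ℝ)) with ⟨h, _⟩ | ⟨h, _⟩ <;> nlinarith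
      linarith
    calc |1+8*(k:ℝ)| * Real.exp (-t*(1+8*(k:ℝ))^2 + b*(1+8*(k:ℝ)))
        ≤ (9*(|(k:ℝ)|+1)) * (Real.exp 1 * Real.exp ((8+16*t) * |(k:ℝ)| - 64*t*(k:ℝ)^2)) := by
          apply mul_le_mul _ hexp (Real.exp_pos _).le (by positivity)
          linarith [abs_nonneg ((k:ℝ))]
      _ = 9 * Real.exp 1 * ((|(k:ℝ)|+1) * Real.exp ((8+16*t) * |(k:ℝ)| - 64*t*(k:ℝ)^2)) := by ring
  have hsum0 : Summable (fun k : ℤ => Complex.exp (-(t:ℂ)*(1+8*(k:ℂ))^2 + ((0:ℝ):ℂ)*(1+8*(k:ℂ)))) := by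
    apply Summable.of_norm
    apply ((summable_workhorse (64*t) (16*t) (by positivity)).of_nonneg_of_le
      (fun _ => norm_nonneg _))
    intro k
    have harg : (-(t:ℂ)*(1+8*(k:ℂ))^2 + ((0:ℝ):ℂ)*(1+8*(k:ℂ)))
        = ((-t*(1+8*(k:ℝ))^2 : ℝ):ℂ) := by push_cast; ring
    rw [harg, ← Complex.ofReal_exp, Complex.norm_real, Real.norm_eq_abs, Real.abs_exp]
    have h1 : (1:ℝ) ≤ |(k:ℝ)| + 1 := by linarith [abs_nonneg ((k:ℝ))]
    have h2 : Real.exp (-t * (1+8*(k:ℝ))^2) ≤ Real.exp (16*t * |(k:ℝ)| - 64*t*(k:ℝ)^2) := by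
      apply Real.exp_le_exp.2
      rcases abs_cases ((k:ℝ)) with ⟨h, _⟩ | ⟨h, _⟩ <;> nlinarith [sq_nonneg (1+8*(k:ℝ))]
    calc Real.exp (-t * (1+8*(k:ℝ))^2) ≤ Real.exp (16*t * |(k:ℝ)| - 64*t*(k:ℝ)^2) := h2
      _ ≤ (|(k:ℝ)| + 1) * Real.exp (16*t * |(k:ℝ)| - 64*t*(k:ℝ)^2) :=
          le_mul_of_one_le_left (Real.exp_pos _).le h1
  have hu : Summable (fun k : ℤ =>
      9 * Real.exp 1 * ((|(k:ℝ)|+1) * Real.exp ((8+16*t) * |(k:ℝ)| - 64*t*(k:ℝ)^2))) :=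
    (summable_workhorse (64*t) (8+16*t) (by positivity)).mul_left _
  have key := hasDerivAt_tsum_of_isPreconnected hu isOpen_Ioo
    (isPreconnected_Ioo) hderiv hbound (by norm_num : (0:ℝ) ∈ Set.Ioo (-1:ℝ) 1) hsum0
    (by norm_num : (0:ℝ) ∈ Set.Ioo (-1:ℝ) 1)
  have heq : (∑' k : ℤ, (1+8*(k:ℂ)) * Complex.exp (-(t:ℂ)*(1+8*(k:ℂ))^2 + ((0:ℝ):ℂ)*(1+8*(k:ℂ))))
      = ∑' k : ℤ, (1+8*(k:ℂ)) * Complex.exp (-(t:ℂ)*(1+8*(k:ℂ))^2) := by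
    refine tsum_congr fun k => ?_
    norm_num
  rw [heq] at key
  exact key

lemma X_eq (t b : ℝ) (m : ℤ) : (m:ℂ) + Complex.I * ((4*(b:ℂ) - 8*(t:ℂ))/(π:ℂ))
    = (((m:ℝ)):ℂ) + (((4*b-8*t)/π : ℝ):ℂ)*Complex.I := by
  push_cast; ring

lemma psi_eq (t b : ℝ) (ht : 0 < t) (m : ℤ) :
    -((π:ℂ)^2/(64*(t:ℂ))) * ((m:ℂ) + Complex.I * ((4*(b:ℂ) - 8*(t:ℂ))/(π:ℂ)))^2
    = ((-(π^2/(64*t))*((m:ℝ)^2-((4*b-8*t)/π)^2) : ℝ):ℂ)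
      + ((-(π^2/(64*t))*(2*m*((4*b-8*t)/π)) : ℝ):ℂ)*Complex.I := by
  have hπ : (π:ℂ) ≠ 0 := Complex.ofReal_ne_zero.2 Real.pi_ne_zero
  have ht' : (t:ℂ) ≠ 0 := Complex.ofReal_ne_zero.2 ht.ne'
  push_cast
  field_simp
  ring_nf
  simp only [Complex.I_sq]
  ring

lemma z_bound (t b : ℝ) (ht : 0 < t) (ht1 : t ≤ 1) (hb1 : -1 < b) (hb2 : b < 1) :
    |(4*b-8*t)/π| ≤ 4 := by
  rw [abs_div, abs_of_pos Real.pi_pos, div_le_iff₀ Real.pi_pos]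
  have : |4*b-8*t| ≤ 12 := by
    rw [abs_le]; constructor <;> nlinarith
  nlinarith [Real.pi_gt_three]

lemma norm_cexp_psi (t b : ℝ) (ht : 0 < t) (ht1 : t ≤ 1) (hb1 : -1 < b) (hb2 : b < 1) (m : ℤ) :
    ‖Complex.exp (-((π:ℂ)^2/(64*(t:ℂ))) * ((m:ℂ) + Complex.I * ((4*(b:ℂ) - 8*(t:ℂ))/(π:ℂ)))^2)‖
      ≤ Real.exp (16*(π^2/(64*t))) * Real.exp (-(π^2/(64*t))*(m:ℝ)^2) := by
  rw [psi_eq t b ht m, Complex.norm_exp, ofReal_add_mul_I_re, ← Real.exp_add]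
  apply Real.exp_le_exp.2
  have hz := z_bound t b ht ht1 hb1 hb2
  have hz2 : ((4*b-8*t)/π)^2 ≤ 16 := by nlinarith [abs_nonneg ((4*b-8*t)/π), _root_.sq_abs ((4*b-8*t)/π)]
  have hμ : 0 < π^2/(64*t) := by positivity
  nlinarith

lemma hasDerivAt_U (t : ℝ) (ht : 0 < t) (ht1 : t ≤ 1) :
    HasDerivAt (fun b : ℝ => ∑' m : ℤ, Complex.exp (-((π:ℂ)^2/(64*(t:ℂ))) *
        ((m:ℂ) + Complex.I * ((4*(b:ℂ) - 8*(t:ℂ))/(π:ℂ)))^2))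
      (∑' m : ℤ, (-(π:ℂ)*Complex.I/(8*(t:ℂ))) *
        ((m:ℂ) + Complex.I * ((4*((0:ℝ):ℂ) - 8*(t:ℂ))/(π:ℂ))) *
        Complex.exp (-((π:ℂ)^2/(64*(t:ℂ))) *
          ((m:ℂ) + Complex.I * ((4*((0:ℝ):ℂ) - 8*(t:ℂ))/(π:ℂ)))^2)) 0 := by
  have hπ : (π:ℂ) ≠ 0 := Complex.ofReal_ne_zero.2 Real.pi_ne_zero
  have ht' : (t:ℂ) ≠ 0 := Complex.ofReal_ne_zero.2 ht.ne'
  set μ : ℝ := π^2/(64*t) with hμdef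
  have hμ : 0 < μ := by positivity
  have hderiv : ∀ (m : ℤ) (b : ℝ), b ∈ Set.Ioo (-1:ℝ) 1 →
      HasDerivAt (fun b : ℝ => Complex.exp (-((π:ℂ)^2/(64*(t:ℂ))) *
          ((m:ℂ) + Complex.I * ((4*(b:ℂ) - 8*(t:ℂ))/(π:ℂ)))^2))
        ((-(π:ℂ)*Complex.I/(8*(t:ℂ))) * ((m:ℂ) + Complex.I * ((4*(b:ℂ) - 8*(t:ℂ))/(π:ℂ))) *
          Complex.exp (-((π:ℂ)^2/(64*(t:ℂ))) *
            ((m:ℂ) + Complex.I * ((4*(b:ℂ) - 8*(t:ℂ))/(π:ℂ)))^2)) b := by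
    intro m b _
    have h1 : HasDerivAt (fun b : ℝ => ((b:ℝ):ℂ)) 1 b := by
      simpa using (hasDerivAt_id b).ofReal_comp
    have hX : HasDerivAt (fun b : ℝ => (m:ℂ) + Complex.I * ((4*(b:ℂ) - 8*(t:ℂ))/(π:ℂ)))
        (Complex.I * (4*1/(π:ℂ))) b :=
      ((((h1.const_mul (4:ℂ)).sub_const (8*(t:ℂ))).div_const (π:ℂ)).const_mul Complex.I).const_add _
    have h2 := (((hX.mul hX).const_mul (-((π:ℂ)^2/(64*(t:ℂ))))).cexp)
    convert h2 using 1
    · funext x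
      congr 1
      simp only [Pi.mul_apply]
      ring
    · simp only [Pi.mul_apply]
      field_simp
      ring
  have hbound : ∀ (m : ℤ) (b : ℝ), b ∈ Set.Ioo (-1:ℝ) 1 →
      ‖(-(π:ℂ)*Complex.I/(8*(t:ℂ))) * ((m:ℂ) + Complex.I * ((4*(b:ℂ) - 8*(t:ℂ))/(π:ℂ))) *
          Complex.exp (-((π:ℂ)^2/(64*(t:ℂ))) *
            ((m:ℂ) + Complex.I * ((4*(b:ℂ) - 8*(t:ℂ))/(π:ℂ)))^2)‖
        ≤ (π/(8*t))*4*Real.exp (16*μ) * ((|(m:ℝ)|+1) * Real.exp (0*|(m:ℝ)| - μ*(m:ℝ)^2)) := by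
    intro m b hb
    obtain ⟨hb1, hb2⟩ := hb
    rw [norm_mul, norm_mul]
    have hc : ‖(-(π:ℂ)*Complex.I/(8*(t:ℂ)))‖ = π/(8*t) := by
      have : (-(π:ℂ)*Complex.I/(8*(t:ℂ))) = ((π/(8*t) : ℝ):ℂ) * (-Complex.I) := by
        push_cast; field_simp
      rw [this, norm_mul, Complex.norm_real, Real.norm_eq_abs, abs_of_pos (by positivity), norm_neg,
        Complex.norm_I, mul_one]
    have hXb : ‖(m:ℂ) + Complex.I * ((4*(b:ℂ) - 8*(t:ℂ))/(π:ℂ))‖ ≤ |(m:ℝ)| + 4 := by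
      rw [X_eq]
      calc ‖(((m:ℝ)):ℂ) + (((4*b-8*t)/π : ℝ):ℂ)*Complex.I‖
          ≤ ‖(((m:ℝ)):ℂ)‖ + ‖(((4*b-8*t)/π : ℝ):ℂ)*Complex.I‖ := norm_add_le _ _
        _ = |(m:ℝ)| + |(4*b-8*t)/π| := by
            rw [norm_mul, Complex.norm_I, mul_one, Complex.norm_real, Complex.norm_real,
              Real.norm_eq_abs, Real.norm_eq_abs]
        _ ≤ |(m:ℝ)| + 4 := by linarith [z_bound t b ht ht1 hb1 hb2]
    have hE := norm_cexp_psi t b ht ht1 hb1 hb2 m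
    rw [hc]
    calc π/(8*t) * ‖(m:ℂ) + Complex.I * ((4*(b:ℂ) - 8*(t:ℂ))/(π:ℂ))‖ *
          ‖Complex.exp (-((π:ℂ)^2/(64*(t:ℂ))) * ((m:ℂ) + Complex.I * ((4*(b:ℂ) - 8*(t:ℂ))/(π:ℂ)))^2)‖
        ≤ π/(8*t) * (|(m:ℝ)| + 4) * (Real.exp (16*μ) * Real.exp (-μ*(m:ℝ)^2)) := by
          apply mul_le_mul (mul_le_mul_of_nonneg_left hXb (by positivity)) hE (norm_nonneg _)
            (by positivity)
      _ ≤ (π/(8*t))*4*Real.exp (16*μ) * ((|(m:ℝ)|+1) * Real.exp (0*|(m:ℝ)| - μ*(m:ℝ)^2)) := by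
          rw [zero_mul, zero_sub]
          have h4 : |(m:ℝ)| + 4 ≤ 4*(|(m:ℝ)|+1) := by linarith [abs_nonneg ((m:ℝ))]
          have := Real.exp_pos (-μ*(m:ℝ)^2)
          have := Real.exp_pos (16*μ)
          have hπt : 0 < π/(8*t) := by positivity
          calc π/(8*t) * (|(m:ℝ)| + 4) * (Real.exp (16*μ) * Real.exp (-μ*(m:ℝ)^2))
              ≤ π/(8*t) * (4*(|(m:ℝ)|+1)) * (Real.exp (16*μ) * Real.exp (-μ*(m:ℝ)^2)) := by
                apply mul_le_mul_of_nonneg_right (mul_le_mul_of_nonneg_left h4 hπt.le) (by positivity)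
            _ = (π/(8*t))*4*Real.exp (16*μ) * ((|(m:ℝ)|+1) * Real.exp (-(μ*(m:ℝ)^2))) := by ring_nf
  have hu : Summable (fun m : ℤ =>
      (π/(8*t))*4*Real.exp (16*μ) * ((|(m:ℝ)|+1) * Real.exp (0*|(m:ℝ)| - μ*(m:ℝ)^2))) :=
    (summable_workhorse μ 0 hμ).mul_left _
  have hsum0 : Summable (fun m : ℤ => Complex.exp (-((π:ℂ)^2/(64*(t:ℂ))) *
      ((m:ℂ) + Complex.I * ((4*((0:ℝ):ℂ) - 8*(t:ℂ))/(π:ℂ)))^2)) := by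
    apply Summable.of_norm
    apply ((summable_workhorse μ 0 hμ).mul_left (Real.exp (16*μ))).of_nonneg_of_le
      (fun _ => norm_nonneg _)
    intro m
    calc ‖Complex.exp (-((π:ℂ)^2/(64*(t:ℂ))) *
        ((m:ℂ) + Complex.I * ((4*((0:ℝ):ℂ) - 8*(t:ℂ))/(π:ℂ)))^2)‖
        ≤ Real.exp (16*μ) * Real.exp (-μ*(m:ℝ)^2) :=
          norm_cexp_psi t 0 ht ht1 (by norm_num) (by norm_num) m
      _ ≤ Real.exp (16*μ) * ((|(m:ℝ)|+1) * Real.exp (0*|(m:ℝ)| - μ*(m:ℝ)^2)) := by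
          rw [zero_mul, zero_sub]
          have h1 : (1:ℝ) ≤ |(m:ℝ)| + 1 := by linarith [abs_nonneg ((m:ℝ))]
          have hee : -(μ*(m:ℝ)^2) = -μ*(m:ℝ)^2 := by ring
          rw [hee]
          exact mul_le_mul_of_nonneg_left
            (le_mul_of_one_le_left (Real.exp_pos _).le h1) (Real.exp_pos _).le
  exact hasDerivAt_tsum_of_isPreconnected hu isOpen_Ioo isPreconnected_Ioo hderiv hbound
    (by norm_num : (0:ℝ) ∈ Set.Ioo (-1:ℝ) 1) hsum0 (by norm_num : (0:ℝ) ∈ Set.Ioo (-1:ℝ) 1)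

lemma ofReal_add_mul_I_im (x y : ℝ) : ((x:ℂ) + (y:ℂ)*Complex.I).im = y := by
  simp only [Complex.add_im, Complex.ofReal_im, Complex.mul_im, Complex.I_re, Complex.I_im,
    Complex.ofReal_re]
  ring

lemma helper_re (u v c : ℝ) :
    (Complex.exp ((u:ℂ) + (v:ℂ)*Complex.I) * ((c:ℂ)*(-Complex.I))).re
      = c * (Real.exp u * Real.sin v) := by
  rw [Complex.mul_re, Complex.exp_re, Complex.exp_im, ofReal_add_mul_I_re, ofReal_add_mul_I_im]
  have h1 : ((c:ℂ)*(-Complex.I)).re = 0 := by simp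
  have h2 : ((c:ℂ)*(-Complex.I)).im = -c := by simp
  rw [h1, h2]
  ring

lemma re_tsum' {f : ℤ → ℂ} (h : Summable f) : (∑' m, f m).re = ∑' m, (f m).re := by
  simpa using Complex.reCLM.map_tsum h

lemma summable_U0 (t : ℝ) (ht : 0 < t) (ht1 : t ≤ 1) :
    Summable (fun m : ℤ => Complex.exp (-((π:ℂ)^2/(64*(t:ℂ))) *
      ((m:ℂ) + Complex.I * ((4*((0:ℝ):ℂ) - 8*(t:ℂ))/(π:ℂ)))^2)) := by
  have hμ : 0 < π^2/(64*t) := by positivity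
  apply Summable.of_norm
  apply ((summable_workhorse (π^2/(64*t)) 0 hμ).mul_left (Real.exp (16*(π^2/(64*t))))).of_nonneg_of_le
    (fun _ => norm_nonneg _)
  intro m
  calc ‖Complex.exp (-((π:ℂ)^2/(64*(t:ℂ))) *
      ((m:ℂ) + Complex.I * ((4*((0:ℝ):ℂ) - 8*(t:ℂ))/(π:ℂ)))^2)‖
      ≤ Real.exp (16*(π^2/(64*t))) * Real.exp (-(π^2/(64*t))*(m:ℝ)^2) :=
        norm_cexp_psi t 0 ht ht1 (by norm_num) (by norm_num) m
    _ ≤ Real.exp (16*(π^2/(64*t))) * ((|(m:ℝ)|+1) * Real.exp (0*|(m:ℝ)| - (π^2/(64*t))*(m:ℝ)^2)) := by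
        rw [zero_mul, zero_sub, show -((π^2/(64*t))*(m:ℝ)^2) = -(π^2/(64*t))*(m:ℝ)^2 by ring]
        exact mul_le_mul_of_nonneg_left
          (le_mul_of_one_le_left (Real.exp_pos _).le (by linarith [abs_nonneg ((m:ℝ))]))
          (Real.exp_pos _).le

lemma summable_DU (t : ℝ) (ht : 0 < t) (ht1 : t ≤ 1) :
    Summable (fun m : ℤ => (-(π:ℂ)*Complex.I/(8*(t:ℂ))) *
      ((m:ℂ) + Complex.I * ((4*((0:ℝ):ℂ) - 8*(t:ℂ))/(π:ℂ))) *
      Complex.exp (-((π:ℂ)^2/(64*(t:ℂ))) *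
        ((m:ℂ) + Complex.I * ((4*((0:ℝ):ℂ) - 8*(t:ℂ))/(π:ℂ)))^2)) := by
  have hμ : 0 < π^2/(64*t) := by positivity
  apply Summable.of_norm
  apply (((summable_workhorse (π^2/(64*t)) 0 hμ).mul_left
    ((π/(8*t))*4*Real.exp (16*(π^2/(64*t))))).of_nonneg_of_le (fun _ => norm_nonneg _))
  intro m
  rw [norm_mul, norm_mul]
  have hc : ‖(-(π:ℂ)*Complex.I/(8*(t:ℂ)))‖ = π/(8*t) := by
    have : (-(π:ℂ)*Complex.I/(8*(t:ℂ))) = ((π/(8*t) : ℝ):ℂ) * (-Complex.I) := by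
      push_cast; field_simp
    rw [this, norm_mul, Complex.norm_real, Real.norm_eq_abs, abs_of_pos (by positivity), norm_neg,
      Complex.norm_I, mul_one]
  have hXb : ‖(m:ℂ) + Complex.I * ((4*((0:ℝ):ℂ) - 8*(t:ℂ))/(π:ℂ))‖ ≤ |(m:ℝ)| + 4 := by
    have hX : (m:ℂ) + Complex.I * ((4*((0:ℝ):ℂ) - 8*(t:ℂ))/(π:ℂ))
        = (((m:ℝ)):ℂ) + (((4*0-8*t)/π : ℝ):ℂ)*Complex.I := by push_cast; ring
    rw [hX]
    calc ‖(((m:ℝ)):ℂ) + (((4*0-8*t)/π : ℝ):ℂ)*Complex.I‖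
        ≤ ‖(((m:ℝ)):ℂ)‖ + ‖(((4*0-8*t)/π : ℝ):ℂ)*Complex.I‖ := norm_add_le _ _
      _ = |(m:ℝ)| + |(4*0-8*t)/π| := by
          rw [norm_mul, Complex.norm_I, mul_one, Complex.norm_real, Complex.norm_real,
            Real.norm_eq_abs, Real.norm_eq_abs]
      _ ≤ |(m:ℝ)| + 4 := by
          have : |(4*0-8*t)/π| ≤ 4 := by
            rw [abs_div, abs_of_pos Real.pi_pos, div_le_iff₀ Real.pi_pos]
            have : |4*0-8*t| ≤ 12 := by rw [abs_le]; constructor <;> nlinarith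
            nlinarith [Real.pi_gt_three]
          linarith
  have hE := norm_cexp_psi t 0 ht ht1 (by norm_num) (by norm_num) m
  rw [hc]
  calc π/(8*t) * ‖(m:ℂ) + Complex.I * ((4*((0:ℝ):ℂ) - 8*(t:ℂ))/(π:ℂ))‖ * ‖Complex.exp _‖
      ≤ π/(8*t) * (|(m:ℝ)| + 4) *
          (Real.exp (16*(π^2/(64*t))) * Real.exp (-(π^2/(64*t))*(m:ℝ)^2)) := by
        apply mul_le_mul (mul_le_mul_of_nonneg_left hXb (by positivity)) hE (norm_nonneg _)
          (by positivity)
    _ ≤ (π/(8*t))*4*Real.exp (16*(π^2/(64*t))) *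
          ((|(m:ℝ)|+1) * Real.exp (0*|(m:ℝ)| - (π^2/(64*t))*(m:ℝ)^2)) := by
        rw [zero_mul, zero_sub]
        have h4 : |(m:ℝ)| + 4 ≤ 4*(|(m:ℝ)|+1) := by linarith [abs_nonneg ((m:ℝ))]
        calc π/(8*t) * (|(m:ℝ)| + 4) *
              (Real.exp (16*(π^2/(64*t))) * Real.exp (-(π^2/(64*t))*(m:ℝ)^2))
            ≤ π/(8*t) * (4*(|(m:ℝ)|+1)) *
              (Real.exp (16*(π^2/(64*t))) * Real.exp (-(π^2/(64*t))*(m:ℝ)^2)) := by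
              apply mul_le_mul_of_nonneg_right
                (mul_le_mul_of_nonneg_left h4 (by positivity)) (by positivity)
          _ = (π/(8*t))*4*Real.exp (16*(π^2/(64*t))) *
              ((|(m:ℝ)|+1) * Real.exp (-((π^2/(64*t))*(m:ℝ)^2))) := by ring_nf

lemma denominator_eval (t : ℝ) (ht : 0 < t) (ht1 : t ≤ 1) :
    ∑' k : ℤ, (1+8*(k:ℝ)) * Real.exp (-t*(1+8*(k:ℝ))^2) =
      Real.sqrt (π/(64*t)) *
        ∑' m : ℤ, (π*(m:ℝ)/(8*t)) * Real.sin (π*m/4) * Real.exp (-(π^2/(64*t))*(m:ℝ)^2) := by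
  have hπ : (π:ℂ) ≠ 0 := Complex.ofReal_ne_zero.2 Real.pi_ne_zero
  have ht' : (t:ℂ) ≠ 0 := Complex.ofReal_ne_zero.2 ht.ne'
  have h1 : HasDerivAt (fun b : ℝ => ((b:ℝ):ℂ)) 1 0 := by
    simpa using (hasDerivAt_id (0:ℝ)).ofReal_comp
  have hexp : HasDerivAt (fun b : ℝ => Complex.exp ((b:ℂ) - (t:ℂ)))
      (Complex.exp (((0:ℝ):ℂ) - (t:ℂ))) 0 := by
    simpa using (h1.sub_const (t:ℂ)).cexp
  have hDU := hasDerivAt_U t ht ht1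
  have hprod := hexp.mul hDU
  have hT := hprod.const_mul ((Real.sqrt (π / (64*t)) : ℝ):ℂ)
  have hST : (fun b : ℝ => ∑' k : ℤ, Complex.exp (-(t:ℂ)*(1+8*(k:ℂ))^2 + (b:ℂ)*(1+8*(k:ℂ))))
      = (fun b : ℝ => ((Real.sqrt (π / (64*t)) : ℝ):ℂ) * (Complex.exp ((b:ℂ) - (t:ℂ)) *
          ∑' m : ℤ, Complex.exp (-((π:ℂ)^2/(64*(t:ℂ))) *
            ((m:ℂ) + Complex.I * ((4*(b:ℂ) - 8*(t:ℂ))/(π:ℂ)))^2))) := by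
    funext b
    rw [theta_shift t ht ((b:ℝ):ℂ), mul_assoc]
  have hDS := hasDerivAt_S t ht
  rw [hST] at hDS
  have huniq := hDS.unique hT
  clear hT hprod hDS hST hexp h1 hDU
  have hsU0 := summable_U0 t ht ht1
  have hsDU := summable_DU t ht ht1
  have hterm : ∀ m : ℤ, Complex.exp (((0:ℝ):ℂ) - (t:ℂ)) *
        Complex.exp (-((π:ℂ)^2/(64*(t:ℂ))) * ((m:ℂ) + Complex.I * ((4*((0:ℝ):ℂ) - 8*(t:ℂ))/(π:ℂ)))^2)
      + Complex.exp (((0:ℝ):ℂ) - (t:ℂ)) *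
        ((-(π:ℂ)*Complex.I/(8*(t:ℂ))) * ((m:ℂ) + Complex.I * ((4*((0:ℝ):ℂ) - 8*(t:ℂ))/(π:ℂ))) *
          Complex.exp (-((π:ℂ)^2/(64*(t:ℂ))) * ((m:ℂ) + Complex.I * ((4*((0:ℝ):ℂ) - 8*(t:ℂ))/(π:ℂ)))^2))
      = Complex.exp (((-(π^2/(64*t))*(m:ℝ)^2 : ℝ):ℂ) + ((π*m/4 : ℝ):ℂ)*Complex.I) *
          (((π*m/(8*t) : ℝ):ℂ) * (-Complex.I)) := by
    intro m
    have e1 : (((0:ℝ):ℂ) - (t:ℂ)) + (-((π:ℂ)^2/(64*(t:ℂ))) *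
          ((m:ℂ) + Complex.I * ((4*((0:ℝ):ℂ) - 8*(t:ℂ))/(π:ℂ)))^2)
        = ((-(π^2/(64*t))*(m:ℝ)^2 : ℝ):ℂ) + ((π*m/4 : ℝ):ℂ)*Complex.I := by
      push_cast
      field_simp
      ring_nf
      simp only [Complex.I_sq]
      ring
    have e2 : (1:ℂ) + (-(π:ℂ)*Complex.I/(8*(t:ℂ))) *
          ((m:ℂ) + Complex.I * ((4*((0:ℝ):ℂ) - 8*(t:ℂ))/(π:ℂ)))
        = ((π*m/(8*t) : ℝ):ℂ) * (-Complex.I) := by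
      push_cast
      field_simp
      ring_nf
      simp only [Complex.I_sq]
      ring
    calc _ = Complex.exp ((((0:ℝ):ℂ) - (t:ℂ)) + (-((π:ℂ)^2/(64*(t:ℂ))) *
          ((m:ℂ) + Complex.I * ((4*((0:ℝ):ℂ) - 8*(t:ℂ))/(π:ℂ)))^2)) *
          ((1:ℂ) + (-(π:ℂ)*Complex.I/(8*(t:ℂ))) *
            ((m:ℂ) + Complex.I * ((4*((0:ℝ):ℂ) - 8*(t:ℂ))/(π:ℂ)))) := by
          rw [Complex.exp_add]; ring
      _ = _ := by rw [e1, e2]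
  have hcombine : Complex.exp (((0:ℝ):ℂ) - (t:ℂ)) * (∑' m : ℤ, Complex.exp (-((π:ℂ)^2/(64*(t:ℂ))) *
        ((m:ℂ) + Complex.I * ((4*((0:ℝ):ℂ) - 8*(t:ℂ))/(π:ℂ)))^2))
      + Complex.exp (((0:ℝ):ℂ) - (t:ℂ)) * (∑' m : ℤ,
        (-(π:ℂ)*Complex.I/(8*(t:ℂ))) * ((m:ℂ) + Complex.I * ((4*((0:ℝ):ℂ) - 8*(t:ℂ))/(π:ℂ))) *
          Complex.exp (-((π:ℂ)^2/(64*(t:ℂ))) * ((m:ℂ) + Complex.I * ((4*((0:ℝ):ℂ) - 8*(t:ℂ))/(π:ℂ)))^2))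
      = ∑' m : ℤ, Complex.exp (((-(π^2/(64*t))*(m:ℝ)^2 : ℝ):ℂ) + ((π*m/4 : ℝ):ℂ)*Complex.I) *
          (((π*m/(8*t) : ℝ):ℂ) * (-Complex.I)) := by
    rw [← tsum_mul_left, ← tsum_mul_left,
      ← Summable.tsum_add (hsU0.mul_left _) (hsDU.mul_left _)]
    exact tsum_congr hterm
  have hsv : Summable (fun m : ℤ =>
      Complex.exp (((-(π^2/(64*t))*(m:ℝ)^2 : ℝ):ℂ) + ((π*m/4 : ℝ):ℂ)*Complex.I) *
        (((π*m/(8*t) : ℝ):ℂ) * (-Complex.I))) :=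
    Summable.congr ((hsU0.mul_left (Complex.exp (((0:ℝ):ℂ) - (t:ℂ)))).add
      (hsDU.mul_left (Complex.exp (((0:ℝ):ℂ) - (t:ℂ))))) hterm
  have hcast : ((∑' k : ℤ, (1+8*(k:ℝ)) * Real.exp (-t*(1+8*(k:ℝ))^2) : ℝ) : ℂ)
      = ∑' k : ℤ, (1+8*(k:ℂ)) * Complex.exp (-(t:ℂ)*(1+8*(k:ℂ))^2) := by
    rw [Complex.ofReal_tsum]
    refine tsum_congr fun k => ?_
    rw [Complex.ofReal_mul, Complex.ofReal_exp]
    congr 1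
    · push_cast; ring
    · congr 1; push_cast; ring
  calc ∑' k : ℤ, (1+8*(k:ℝ)) * Real.exp (-t*(1+8*(k:ℝ))^2)
      = (((∑' k : ℤ, (1+8*(k:ℝ)) * Real.exp (-t*(1+8*(k:ℝ))^2) : ℝ)):ℂ).re := (Complex.ofReal_re _).symm
    _ = ((((Real.sqrt (π / (64*t)) : ℝ)):ℂ) * ∑' m : ℤ,
          Complex.exp (((-(π^2/(64*t))*(m:ℝ)^2 : ℝ):ℂ) + ((π*m/4 : ℝ):ℂ)*Complex.I) *
            (((π*m/(8*t) : ℝ):ℂ) * (-Complex.I))).re := by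
        rw [hcast, huniq, hcombine]
    _ = Real.sqrt (π / (64*t)) * ∑' m : ℤ,
          (Complex.exp (((-(π^2/(64*t))*(m:ℝ)^2 : ℝ):ℂ) + ((π*m/4 : ℝ):ℂ)*Complex.I) *
            (((π*m/(8*t) : ℝ):ℂ) * (-Complex.I))).re := by
        rw [Complex.re_ofReal_mul, re_tsum' hsv]
    _ = Real.sqrt (π/(64*t)) *
        ∑' m : ℤ, (π*(m:ℝ)/(8*t)) * Real.sin (π*m/4) * Real.exp (-(π^2/(64*t))*(m:ℝ)^2) := by
        congr 1
        refine tsum_congr fun m => ?_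
        rw [helper_re]
        ring

lemma tendsto_aux (c : ℤ → ℝ) (hc0 : c 0 = 0) (K : ℝ)
    (hbound : ∀ m : ℤ, |c m| ≤ Real.exp (K * |(m:ℝ)|) * (|(m:ℝ)|+1)) :
    Tendsto (fun n : ℕ => ∑' m : ℤ, c m * Real.exp (-(π^2*(n:ℝ)/8)*((m:ℝ)^2-1))) atTop
      (𝓝 (c 1 + c (-1))) := by
  have hq : 0 < π^2/8 := by positivity
  set bound : ℤ → ℝ := fun m => if m = 0 then 0 else
    Real.exp (K * |(m:ℝ)|) * (|(m:ℝ)|+1) * Real.exp (-(π^2/8)*((m:ℝ)^2-1)) with hbdef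
  set g : ℤ → ℝ := fun m => if m = 1 then c 1 else if m = -1 then c (-1) else 0 with hgdef
  have h_sum : Summable bound := by
    apply ((summable_workhorse (π^2/8) K hq).mul_left (Real.exp (π^2/8))).of_nonneg_of_le
    · intro m
      by_cases hm : m = 0 <;> simp [hbdef, hm] <;> positivity
    · intro m
      by_cases hm : m = 0
      · simp [hbdef, hm]; positivity
      · simp only [hbdef, hm, if_false]
        rw [show Real.exp (-(π^2/8)*((m:ℝ)^2-1)) = Real.exp (π^2/8) * Real.exp (-(π^2/8)*(m:ℝ)^2) by
          rw [← Real.exp_add]; ring_nf]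
        rw [show K * |(m:ℝ)| - π^2/8*(m:ℝ)^2 = K * |(m:ℝ)| + -(π^2/8)*(m:ℝ)^2 by ring,
          Real.exp_add]
        ring_nf
        exact le_refl _
  have hab : ∀ m : ℤ, Tendsto (fun n : ℕ => c m * Real.exp (-(π^2*(n:ℝ)/8)*((m:ℝ)^2-1)))
      atTop (𝓝 (g m)) := by
    intro m
    by_cases hm1 : m = 1
    · subst hm1
      have hgm : g 1 = c 1 := by simp [hgdef]
      rw [hgm]
      have heq : ∀ n : ℕ, c 1 * Real.exp (-(π^2*(n:ℝ)/8)*(((1:ℤ):ℝ)^2-1)) = c 1 := by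
        intro n; norm_num
      simp only [heq]
      exact tendsto_const_nhds
    · by_cases hm2 : m = -1
      · subst hm2
        have hgm : g (-1) = c (-1) := by norm_num [hgdef]
        rw [hgm]
        have heq : ∀ n : ℕ, c (-1) * Real.exp (-(π^2*(n:ℝ)/8)*((((-1):ℤ):ℝ)^2-1)) = c (-1) := by
          intro n; norm_num
        simp only [heq]
        exact tendsto_const_nhds
      · by_cases hm0 : m = 0
        · subst hm0
          have hgm : g 0 = 0 := by norm_num [hgdef]
          rw [hgm]
          simp only [hc0, zero_mul]
          exact tendsto_const_nhds
        · have hgm : g m = 0 := by simp [hgdef, hm1, hm2]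
          rw [hgm]
          have habs : (1:ℝ) < |(m:ℝ)| := by
            have h2 : (2:ℤ) ≤ |m| := by
              rcases le_or_gt 0 m with h|h
              · rw [abs_of_nonneg h]; omega
              · rw [abs_of_neg h]; omega
            have h2' : (2:ℝ) ≤ |(m:ℝ)| := by
              rw [← Int.cast_abs]; exact_mod_cast h2
            linarith
          have hsq : (1:ℝ) < (m:ℝ)^2 := by nlinarith [_root_.sq_abs ((m:ℝ))]
          have hlt : Real.exp (-(π^2/8)*((m:ℝ)^2-1)) < 1 := by
            have hpos := mul_pos hq (by linarith : (0:ℝ) < (m:ℝ)^2 - 1)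
            calc Real.exp (-(π^2/8)*((m:ℝ)^2-1)) < Real.exp 0 := by
                  apply Real.exp_lt_exp.2; linarith
              _ = 1 := Real.exp_zero
          have hpow : ∀ n : ℕ, Real.exp (-(π^2*(n:ℝ)/8)*((m:ℝ)^2-1))
              = (Real.exp (-(π^2/8)*((m:ℝ)^2-1)))^n := by
            intro n
            rw [← Real.exp_nat_mul]
            congr 1
            ring
          simp only [hpow]
          have h0 := tendsto_pow_atTop_nhds_zero_of_lt_one (Real.exp_nonneg _) hlt
          have := tendsto_const_nhds (x := c m) (f := atTop (α := ℕ)) |>.mul h0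
          simpa using this
  have hbnd : ∀ᶠ (n : ℕ) in atTop, ∀ m : ℤ,
      ‖c m * Real.exp (-(π^2*(n:ℝ)/8)*((m:ℝ)^2-1))‖ ≤ bound m := by
    filter_upwards [eventually_ge_atTop 1] with n hn
    intro m
    by_cases hm : m = 0
    · subst hm
      simp [hc0, hbdef]
    · simp only [hbdef, hm, if_false]
      rw [Real.norm_eq_abs, abs_mul, Real.abs_exp]
      have hmsq : (1:ℝ) ≤ (m:ℝ)^2 := by
        have h1 : (1:ℤ) ≤ |m| := by
          rcases le_or_gt 0 m with h|h
          · rw [abs_of_nonneg h]; omega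
          · rw [abs_of_neg h]; omega
        have h1' : (1:ℝ) ≤ |(m:ℝ)| := by rw [← Int.cast_abs]; exact_mod_cast h1
        nlinarith [_root_.sq_abs ((m:ℝ))]
      have hE : Real.exp (-(π^2*(n:ℝ)/8)*((m:ℝ)^2-1)) ≤ Real.exp (-(π^2/8)*((m:ℝ)^2-1)) := by
        apply Real.exp_le_exp.2
        have hn' : (1:ℝ) ≤ (n:ℝ) := by exact_mod_cast hn
        nlinarith [mul_nonneg (mul_nonneg hq.le (by linarith : (0:ℝ) ≤ (m:ℝ)^2-1))
          (by linarith : (0:ℝ) ≤ (n:ℝ)-1)]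
      calc |c m| * Real.exp (-(π^2*(n:ℝ)/8)*((m:ℝ)^2-1))
          ≤ (Real.exp (K * |(m:ℝ)|) * (|(m:ℝ)|+1)) * Real.exp (-(π^2/8)*((m:ℝ)^2-1)) :=
            mul_le_mul (hbound m) hE (Real.exp_pos _).le (by positivity)
        _ = Real.exp (K * |(m:ℝ)|) * (|(m:ℝ)|+1) * Real.exp (-(π^2/8)*((m:ℝ)^2-1)) := by ring
  have hg : ∑' m : ℤ, g m = c 1 + c (-1) := by
    have hsupp : ∀ m : ℤ, m ∉ ({1, -1} : Finset ℤ) → g m = 0 := by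
      intro m hm
      simp only [Finset.mem_insert, Finset.mem_singleton] at hm
      push_neg at hm
      simp [hgdef, hm.1, hm.2]
    rw [tsum_eq_sum hsupp]
    simp [hgdef]
  have key := tendsto_tsum_of_dominated_convergence (f := fun (n : ℕ) (m : ℤ) =>
      c m * Real.exp (-(π^2*(n:ℝ)/8)*((m:ℝ)^2-1))) (g := g) (bound := bound) h_sum hab hbnd
  rw [hg] at key
  exact key

set_option maxHeartbeats 1000000 in
lemma quotient_eq (a : ℝ) (n : ℕ) (hn : 1 ≤ n)
    (hB : 0 < ∑' m : ℤ, (m:ℝ) * Real.sin (π*m/4) * Real.exp (-(π^2*(n:ℝ)/8)*((m:ℝ)^2-1))) :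
    (∑' k : ℤ, Real.sin ((a / (n : ℝ)) * (1 + 8 * (k : ℝ))) *
        Real.exp (-(2 / (n : ℝ)) * ((k : ℝ) + 4 * (k : ℝ) ^ 2))) /
      ((1 / (n : ℝ)) * ∑' k : ℤ, (1 + 8 * (k : ℝ)) *
        Real.exp (-(2 / (n : ℝ)) * ((k : ℝ) + 4 * (k : ℝ) ^ 2)))
    = (Real.exp (-(16*a^2*(1/(8*(n:ℝ))))) *
        ∑' m : ℤ, Real.sin (π*m/4) * Real.exp (π*a*m) * Real.exp (-(π^2*(n:ℝ)/8)*((m:ℝ)^2-1))) /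
      (π * ∑' m : ℤ, (m:ℝ) * Real.sin (π*m/4) * Real.exp (-(π^2*(n:ℝ)/8)*((m:ℝ)^2-1))) := by
  have hn' : (1:ℝ) ≤ (n:ℝ) := by exact_mod_cast hn
  have hnpos : (0:ℝ) < (n:ℝ) := by linarith
  have hne : (n:ℝ) ≠ 0 := hnpos.ne'
  set t : ℝ := 1/(8*(n:ℝ)) with htdef
  have ht : 0 < t := by rw [htdef]; positivity
  have ht1 : t ≤ 1 := by
    rw [htdef, div_le_one (by linarith)]
    linarith
  have hnum : (∑' k : ℤ, Real.sin ((a / (n : ℝ)) * (1 + 8 * (k : ℝ))) *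
        Real.exp (-(2 / (n : ℝ)) * ((k : ℝ) + 4 * (k : ℝ) ^ 2)))
      = Real.exp t * ∑' k : ℤ, Real.sin (8*a*t*(1+8*(k:ℝ))) * Real.exp (-t*(1+8*(k:ℝ))^2) := by
    rw [← tsum_mul_left]
    refine tsum_congr fun k => ?_
    have h1 : 8*a*t*(1+8*(k:ℝ)) = (a/(n:ℝ)) * (1+8*(k:ℝ)) := by
      rw [htdef]; field_simp
    have h2 : t + -t*(1+8*(k:ℝ))^2 = -(2/(n:ℝ))*((k:ℝ)+4*(k:ℝ)^2) := by
      rw [htdef]; field_simp; ring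
    rw [show Real.exp t * (Real.sin (8*a*t*(1+8*(k:ℝ))) * Real.exp (-t*(1+8*(k:ℝ))^2))
        = Real.sin (8*a*t*(1+8*(k:ℝ))) * Real.exp (t + -t*(1+8*(k:ℝ))^2) from by
      rw [Real.exp_add]; ring]
    rw [h1, h2]
  have hden : (∑' k : ℤ, (1 + 8 * (k : ℝ)) *
        Real.exp (-(2 / (n : ℝ)) * ((k : ℝ) + 4 * (k : ℝ) ^ 2)))
      = Real.exp t * ∑' k : ℤ, (1+8*(k:ℝ)) * Real.exp (-t*(1+8*(k:ℝ))^2) := by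
    rw [← tsum_mul_left]
    refine tsum_congr fun k => ?_
    have h2 : t + -t*(1+8*(k:ℝ))^2 = -(2/(n:ℝ))*((k:ℝ)+4*(k:ℝ)^2) := by
      rw [htdef]; field_simp; ring
    rw [show Real.exp t * ((1+8*(k:ℝ)) * Real.exp (-t*(1+8*(k:ℝ))^2))
        = (1+8*(k:ℝ)) * Real.exp (t + -t*(1+8*(k:ℝ))^2) from by
      rw [Real.exp_add]; ring]
    rw [h2]
  have hA : (∑' m : ℤ, Real.sin (π*m/4) * Real.exp (π*a*m - π^2*m^2/(64*t)))
      = Real.exp (-(π^2*(n:ℝ)/8)) *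
        ∑' m : ℤ, Real.sin (π*m/4) * Real.exp (π*a*m) * Real.exp (-(π^2*(n:ℝ)/8)*((m:ℝ)^2-1)) := by
    rw [← tsum_mul_left]
    refine tsum_congr fun m => ?_
    rw [show Real.exp (-(π^2*(n:ℝ)/8)) *
        (Real.sin (π*m/4) * Real.exp (π*a*m) * Real.exp (-(π^2*(n:ℝ)/8)*((m:ℝ)^2-1)))
        = Real.sin (π*m/4) * Real.exp (-(π^2*(n:ℝ)/8) + (π*a*m + -(π^2*(n:ℝ)/8)*((m:ℝ)^2-1)))
        from by rw [Real.exp_add, Real.exp_add]; ring]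
    congr 2
    rw [htdef]
    field_simp
    ring
  have hBs : (∑' m : ℤ, (π*(m:ℝ)/(8*t)) * Real.sin (π*m/4) * Real.exp (-(π^2/(64*t))*(m:ℝ)^2))
      = π*(n:ℝ)*Real.exp (-(π^2*(n:ℝ)/8)) *
        ∑' m : ℤ, (m:ℝ) * Real.sin (π*m/4) * Real.exp (-(π^2*(n:ℝ)/8)*((m:ℝ)^2-1)) := by
    rw [← tsum_mul_left]
    refine tsum_congr fun m => ?_
    rw [show π*(n:ℝ)*Real.exp (-(π^2*(n:ℝ)/8)) *
        ((m:ℝ) * Real.sin (π*m/4) * Real.exp (-(π^2*(n:ℝ)/8)*((m:ℝ)^2-1)))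
        = (π*(n:ℝ)*(m:ℝ)) * Real.sin (π*m/4) *
          Real.exp (-(π^2*(n:ℝ)/8) + -(π^2*(n:ℝ)/8)*((m:ℝ)^2-1))
        from by rw [Real.exp_add]; ring]
    congr 2
    · rw [htdef]; field_simp
    · rw [htdef]; field_simp; ring
  rw [hnum, hden, numerator_eval t a ht, denominator_eval t ht ht1, hA, hBs]
  have hsq : 0 < Real.sqrt (π/(64*t)) := Real.sqrt_pos.2 (by positivity)
  have hπ := Real.pi_pos
  rw [show (1/(n:ℝ) * (Real.exp t * (Real.sqrt (π/(64*t)) * (π*(n:ℝ)*Real.exp (-(π^2*(n:ℝ)/8)) *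
      ∑' m : ℤ, (m:ℝ) * Real.sin (π*m/4) * Real.exp (-(π^2*(n:ℝ)/8)*((m:ℝ)^2-1)))))) =
      Real.exp t * (Real.sqrt (π/(64*t)) * (π*Real.exp (-(π^2*(n:ℝ)/8)) *
      ∑' m : ℤ, (m:ℝ) * Real.sin (π*m/4) * Real.exp (-(π^2*(n:ℝ)/8)*((m:ℝ)^2-1)))) from by
    field_simp]
  have hden2 : 0 < Real.exp t * (Real.sqrt (π/(64*t)) * (π*Real.exp (-(π^2*(n:ℝ)/8)) *
      ∑' m : ℤ, (m:ℝ) * Real.sin (π*m/4) * Real.exp (-(π^2*(n:ℝ)/8)*((m:ℝ)^2-1)))) := by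
    apply mul_pos (Real.exp_pos _)
    apply mul_pos hsq
    exact mul_pos (by positivity) hB
  have hden1 : 0 < π * ∑' m : ℤ, (m:ℝ) * Real.sin (π*m/4) *
      Real.exp (-(π^2*(n:ℝ)/8)*((m:ℝ)^2-1)) := mul_pos hπ hB
  rw [div_eq_div_iff hden2.ne' hden1.ne']
  ring

/-- For every `a ∈ ℝ`, as `n → ∞` over positive integers,
`[Σ_{k ∈ ℤ} sin((a/n)(1 + 8k)) e^{−(2/n)(k + 4k²)}] / [(1/n) Σ_{k ∈ ℤ} (1 + 8k) e^{−(2/n)(k + 4k²)}]`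
converges to `sinh(aπ)/π`. -/
theorem quotient_tendsto_sinh (a : ℝ) :
    Tendsto (fun n : ℕ =>
        (∑' k : ℤ, Real.sin ((a / (n : ℝ)) * (1 + 8 * (k : ℝ))) *
            Real.exp (-(2 / (n : ℝ)) * ((k : ℝ) + 4 * (k : ℝ) ^ 2))) /
          ((1 / (n : ℝ)) * ∑' k : ℤ, (1 + 8 * (k : ℝ)) *
            Real.exp (-(2 / (n : ℝ)) * ((k : ℝ) + 4 * (k : ℝ) ^ 2))))
      atTop (nhds (Real.sinh (a * Real.pi) / Real.pi)) := by
  have hπ := Real.pi_pos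
  have hs2 : (0:ℝ) < Real.sqrt 2 := Real.sqrt_pos.2 (by norm_num)
  -- limit of the A-sums
  have hA : Tendsto (fun n : ℕ => ∑' m : ℤ,
      Real.sin (π*m/4) * Real.exp (π*a*m) * Real.exp (-(π^2*(n:ℝ)/8)*((m:ℝ)^2-1))) atTop
      (𝓝 (Real.sqrt 2 * Real.sinh (a*π))) := by
    have key := tendsto_aux (fun m : ℤ => Real.sin (π*m/4) * Real.exp (π*a*m))
      (by norm_num) (π*|a|) ?_
    · have hval : (fun m : ℤ => Real.sin (π*m/4) * Real.exp (π*a*m)) 1 +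
          (fun m : ℤ => Real.sin (π*m/4) * Real.exp (π*a*m)) (-1)
          = Real.sqrt 2 * Real.sinh (a*π) := by
        simp only [Int.cast_one, Int.cast_neg]
        rw [show π*(1:ℝ)/4 = π/4 by ring, show π*(-1:ℝ)/4 = -(π/4) by ring,
          Real.sin_neg, Real.sin_pi_div_four, Real.sinh_eq,
          show π*a*(1:ℝ) = a*π by ring, show π*a*(-1:ℝ) = -(a*π) by ring]
        rw [show Real.sqrt 2 / 2 * Real.exp (a*π) + -(Real.sqrt 2/2) * Real.exp (-(a*π))
            = Real.sqrt 2 * ((Real.exp (a*π) - Real.exp (-(a*π)))/2) by ring]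
      rw [hval] at key
      exact key
    · intro m
      have h1 : |Real.sin (π*m/4) * Real.exp (π*a*m)| ≤ Real.exp (π*a*m) := by
        rw [abs_mul, Real.abs_exp]
        calc |Real.sin (π*m/4)| * Real.exp (π*a*m) ≤ 1 * Real.exp (π*a*m) :=
              mul_le_mul_of_nonneg_right (abs_le.2 ⟨Real.neg_one_le_sin _, Real.sin_le_one _⟩) (Real.exp_pos _).le
          _ = Real.exp (π*a*m) := one_mul _
      have h2 : Real.exp (π*a*m) ≤ Real.exp (π*|a| * |(m:ℝ)|) := by
        apply Real.exp_le_exp.2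
        calc π*a*(m:ℝ) ≤ |π*a*(m:ℝ)| := le_abs_self _
          _ = π*|a| * |(m:ℝ)| := by rw [abs_mul, abs_mul, abs_of_pos hπ]
      calc |Real.sin (π*m/4) * Real.exp (π*a*m)| ≤ Real.exp (π*|a| * |(m:ℝ)|) := h1.trans h2
        _ ≤ Real.exp (π*|a| * |(m:ℝ)|) * (|(m:ℝ)|+1) := by
            apply le_mul_of_one_le_right (Real.exp_pos _).le
            linarith [abs_nonneg ((m:ℝ))]
  -- limit of the B-sums
  have hB : Tendsto (fun n : ℕ => ∑' m : ℤ,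
      (m:ℝ) * Real.sin (π*m/4) * Real.exp (-(π^2*(n:ℝ)/8)*((m:ℝ)^2-1))) atTop
      (𝓝 (Real.sqrt 2)) := by
    have key := tendsto_aux (fun m : ℤ => (m:ℝ) * Real.sin (π*m/4)) (by norm_num) 0 ?_
    · have hval : (fun m : ℤ => (m:ℝ) * Real.sin (π*m/4)) 1 +
          (fun m : ℤ => (m:ℝ) * Real.sin (π*m/4)) (-1) = Real.sqrt 2 := by
        simp only [Int.cast_one, Int.cast_neg]
        rw [show π*(1:ℝ)/4 = π/4 by ring, show π*(-1:ℝ)/4 = -(π/4) by ring,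
          Real.sin_neg, Real.sin_pi_div_four]
        ring
      rw [hval] at key
      exact key
    · intro m
      rw [abs_mul]
      calc |(m:ℝ)| * |Real.sin (π*m/4)| ≤ |(m:ℝ)| * 1 :=
            mul_le_mul_of_nonneg_left (abs_le.2 ⟨Real.neg_one_le_sin _, Real.sin_le_one _⟩) (abs_nonneg _)
        _ ≤ Real.exp (0 * |(m:ℝ)|) * (|(m:ℝ)|+1) := by
            rw [zero_mul, Real.exp_zero, one_mul, mul_one]
            linarith
  -- exponential prefactor tends to 1
  have hexp : Tendsto (fun n : ℕ => Real.exp (-(16*a^2*(1/(8*(n:ℝ)))))) atTop (𝓝 1) := by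
    have h0 : Tendsto (fun n : ℕ => -(16*a^2*(1/(8*(n:ℝ))))) atTop (𝓝 0) := by
      have base := tendsto_const_div_atTop_nhds_zero_nat (-(2*a^2))
      apply base.congr
      intro n
      rcases eq_or_ne ((n:ℝ)) 0 with h | h
      · rw [h]; simp
      · field_simp
        ring
    have := (Real.continuous_exp.tendsto 0).comp h0
    rwa [Real.exp_zero] at this
  -- eventually positive denominator-sum
  have hBpos : ∀ᶠ (n : ℕ) in atTop, 0 < ∑' m : ℤ,
      (m:ℝ) * Real.sin (π*m/4) * Real.exp (-(π^2*(n:ℝ)/8)*((m:ℝ)^2-1)) :=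
    hB.eventually (eventually_gt_nhds hs2)
  -- combine
  have hlim : Tendsto (fun n : ℕ =>
      (Real.exp (-(16*a^2*(1/(8*(n:ℝ))))) *
        ∑' m : ℤ, Real.sin (π*m/4) * Real.exp (π*a*m) * Real.exp (-(π^2*(n:ℝ)/8)*((m:ℝ)^2-1))) /
      (π * ∑' m : ℤ, (m:ℝ) * Real.sin (π*m/4) * Real.exp (-(π^2*(n:ℝ)/8)*((m:ℝ)^2-1)))) atTop
      (𝓝 ((1 * (Real.sqrt 2 * Real.sinh (a*π))) / (π * Real.sqrt 2))) :=
    (hexp.mul hA).div (tendsto_const_nhds.mul hB) (by positivity)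
  have hval : (1 * (Real.sqrt 2 * Real.sinh (a*π))) / (π * Real.sqrt 2)
      = Real.sinh (a*π) / π := by
    rw [one_mul, mul_comm π (Real.sqrt 2), mul_div_mul_left _ _ hs2.ne']
  rw [hval] at hlim
  apply hlim.congr'
  filter_upwards [eventually_ge_atTop 1, hBpos] with n h1 h2
  exact (quotient_eq a n h1 h2).symm
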